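/- (Theorem 3.1) For all integers N ≥ 3 and M ≥ 3, the block bi-diagonal Toeplitz matrix P_W is nonsingular (invertible). -/
import Mathlib


open scoped Matrix

/-- The coefficients `g_k^{(β)}`. -/
noncomputable def gcoef (β : ℝ) : ℕ → ℝ
  | 0 => 1
  | k + 1 => (1 - (β + 1) / ((k : ℝ) + 1)) * gcoef β k

/-- The WSGD coefficients `ω_k^{(β)}`. -/
noncomputable def w (β : ℝ) : ℕ → ℝ
  | 0 => β / 2 * gcoef β 0
  | k + 1 => β / 2 * gcoef β (k + 1) + (2 - β) / 2 * gcoef β k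
/-- The `(N−1) × (N−1)` lower Hessenberg Toeplitz matrix `G_β`
(1-based entry `(i,j)` equals `ω_{i−j+1}` when `i − j + 1 ≥ 0`, else `0`). -/
noncomputable def Gmat (β : ℝ) (N : ℕ) : Matrix (Fin (N - 1)) (Fin (N - 1)) ℝ :=
  Matrix.of fun i j => if (j : ℕ) ≤ (i : ℕ) + 1 then w β ((i : ℕ) + 1 - (j : ℕ)) else 0

/-- `K_N = e₁·G_β + e₂·G_βᵀ`. -/
noncomputable def Kmat (β e1 e2 : ℝ) (N : ℕ) : Matrix (Fin (N - 1)) (Fin (N - 1)) ℝ :=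
  e1 • Gmat β N + e2 • (Gmat β N)ᵀ
/-- `c_0^{(α,σ)} = τ^{−α}·σ^{1−α}/Γ(2−α)` with `σ = 1 − α/2`. -/
noncomputable def c0 (α τ : ℝ) : ℝ :=
  τ ^ (-α) * (1 - α / 2) ^ (1 - α) / Real.Gamma (2 - α)

/-- `A_0 = h^β·c_0^{(α,σ)}·I − σ·K_N` with `σ = 1 − α/2`. -/
noncomputable def A0mat (β α h τ e1 e2 : ℝ) (N : ℕ) :
    Matrix (Fin (N - 1)) (Fin (N - 1)) ℝ :=
  (h ^ β * c0 α τ) • (1 : Matrix (Fin (N - 1)) (Fin (N - 1)) ℝ) -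
    (1 - α / 2) • Kmat β e1 e2 N
/-- `a_l^{(α,σ)}` with `σ = 1 − α/2`. -/
noncomputable def acoef (α : ℝ) (l : ℕ) : ℝ :=
  ((l : ℝ) + (1 - α / 2)) ^ (1 - α) - ((l : ℝ) - 1 + (1 - α / 2)) ^ (1 - α)

/-- `b_l^{(α,σ)}` with `σ = 1 − α/2`. -/
noncomputable def bcoef (α : ℝ) (l : ℕ) : ℝ :=
  (1 / (2 - α)) * (((l : ℝ) + (1 - α / 2)) ^ (2 - α) - ((l : ℝ) - 1 + (1 - α / 2)) ^ (2 - α)) -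
    (1 / 2) * (((l : ℝ) + (1 - α / 2)) ^ (1 - α) - ((l : ℝ) - 1 + (1 - α / 2)) ^ (1 - α))

/-- `c_k^{(α,σ)}`. -/
noncomputable def ccoef (α τ : ℝ) : ℕ → ℝ
  | 0 => c0 α τ
  | k + 1 => τ ^ (-α) / Real.Gamma (2 - α) *
      (acoef α (k + 1) + bcoef α (k + 2) - bcoef α (k + 1))

/-- `A_1 = h^β·(c_1 − c_0)·I − (1 − σ)·K_N` with `σ = 1 − α/2`. -/
noncomputable def A1mat (β α h τ e1 e2 : ℝ) (N : ℕ) :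
    Matrix (Fin (N - 1)) (Fin (N - 1)) ℝ :=
  (h ^ β * (ccoef α τ 1 - ccoef α τ 0)) • (1 : Matrix (Fin (N - 1)) (Fin (N - 1)) ℝ) -
    (1 - (1 - α / 2)) • Kmat β e1 e2 N

/-- The blocks `A_k` of the block lower triangular Toeplitz matrix `W`:
`A_0`, `A_1` as above, and `A_k = h^β(c_k − c_{k−1})·I` for `k ≥ 2`. -/
noncomputable def Ablk (β α h τ e1 e2 : ℝ) (N : ℕ) (k : ℕ) :
    Matrix (Fin (N - 1)) (Fin (N - 1)) ℝ :=
  if k = 0 then A0mat β α h τ e1 e2 N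
  else if k = 1 then A1mat β α h τ e1 e2 N
  else (h ^ β * (ccoef α τ k - ccoef α τ (k - 1))) • (1 : Matrix (Fin (N - 1)) (Fin (N - 1)) ℝ)

/-- The block lower triangular block-Toeplitz matrix `W`
whose `(i,j)` block equals `A_{i−j}` for `i ≥ j` and `0` for `i < j`. -/
noncomputable def Wmat (β α h τ e1 e2 : ℝ) (M N : ℕ) :
    Matrix (Fin (M - 1) × Fin (N - 1)) (Fin (M - 1) × Fin (N - 1)) ℝ :=
  Matrix.of fun p q =>
    if (q.1 : ℕ) ≤ (p.1 : ℕ) then Ablk β α h τ e1 e2 N ((p.1 : ℕ) - (q.1 : ℕ)) p.2 q.2 else 0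

/-- The block lower bidiagonal Toeplitz preconditioner `P_W`
with diagonal blocks `A_0` and first subdiagonal blocks `A_1`. -/
noncomputable def PWmat (β α h τ e1 e2 : ℝ) (M N : ℕ) :
    Matrix (Fin (M - 1) × Fin (N - 1)) (Fin (M - 1) × Fin (N - 1)) ℝ :=
  Matrix.of fun p q =>
    if (p.1 : ℕ) = (q.1 : ℕ) then A0mat β α h τ e1 e2 N p.2 q.2
    else if (p.1 : ℕ) = (q.1 : ℕ) + 1 then A1mat β α h τ e1 e2 N p.2 q.2
    else 0

section AuxCoeff

open Finset

variable {β : ℝ}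

lemma gcoef_succ (k : ℕ) : gcoef β (k+1) = (1 - (β+1)/((k:ℝ)+1)) * gcoef β k := rfl

lemma gcoef_pos (hβ1 : 1 < β) (hβ2 : β < 2) : ∀ k, 2 ≤ k → 0 < gcoef β k := by
  intro k hk
  induction k with
  | zero => omega
  | succ n ih =>
    rcases Nat.lt_or_ge n 2 with hn | hn
    · interval_cases n
      · omega
      · show 0 < gcoef β 2
        have h1 : gcoef β 1 = (1 - (β+1)/((0:ℕ)+1:ℝ)) * gcoef β 0 := gcoef_succ 0
        have h2 : gcoef β 2 = (1 - (β+1)/((1:ℕ)+1:ℝ)) * gcoef β 1 := gcoef_succ 1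
        have h0 : gcoef β 0 = 1 := rfl
        rw [h2, h1, h0]; push_cast; nlinarith
    · have hpos := ih (by omega)
      have h3 : (3:ℝ) ≤ (n:ℝ) + 1 := by
        have : (2:ℝ) ≤ (n:ℝ) := by exact_mod_cast hn
        linarith
      have hf : (0:ℝ) < 1 - (β+1)/((n:ℝ)+1) := by
        rw [sub_pos, div_lt_one (by linarith)]
        linarith
      rw [gcoef_succ]
      exact mul_pos hf hpos

lemma gcoef_inv : ∀ n : ℕ, ((n:ℝ) - β) * gcoef β n
    = -β * ∑ k ∈ range (n+1), gcoef β k := by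
  intro n
  induction n with
  | zero =>
    have h0 : gcoef β 0 = 1 := rfl
    simp [h0]
  | succ n ih =>
    rw [Finset.sum_range_succ, mul_add, ← ih, gcoef_succ]
    have hne : ((n:ℝ)+1) ≠ 0 := by positivity
    push_cast
    field_simp
    ring

lemma gsum_neg (hβ1 : 1 < β) (hβ2 : β < 2) :
    ∀ n, 1 ≤ n → ∑ k ∈ range (n+1), gcoef β k < 0 := by
  intro n hn
  rcases Nat.lt_or_ge n 2 with h2 | h2
  · interval_cases n
    have h1 : gcoef β 1 = (1 - (β+1)/((0:ℕ)+1:ℝ)) * gcoef β 0 := gcoef_succ 0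
    have h0 : gcoef β 0 = 1 := rfl
    rw [Finset.sum_range_succ, Finset.sum_range_one, h1, h0]
    push_cast; nlinarith
  · have hg := gcoef_pos hβ1 hβ2 n h2
    have hinv := gcoef_inv (β := β) n
    have hcast : (2:ℝ) ≤ (n:ℝ) := by exact_mod_cast h2
    nlinarith [hinv, hg]

lemma w_succ (k : ℕ) : w β (k+1) = β / 2 * gcoef β (k + 1) + (2 - β) / 2 * gcoef β k := rfl

lemma w_zero : w β 0 = β / 2 * gcoef β 0 := rfl

lemma w1_neg (hβ1 : 1 < β) (hβ2 : β < 2) : w β 1 < 0 := by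
  have h1 : gcoef β 1 = (1 - (β+1)/((0:ℕ)+1:ℝ)) * gcoef β 0 := gcoef_succ 0
  have h0 : gcoef β 0 = 1 := rfl
  rw [show (1:ℕ) = 0 + 1 from rfl, w_succ, h1, h0]
  push_cast; nlinarith

lemma w_nonneg (hβ1 : 1 < β) (hβ2 : β < 2) : ∀ k, 3 ≤ k → 0 ≤ w β k := by
  intro k hk
  obtain ⟨m, rfl⟩ : ∃ m, k = m + 1 := ⟨k - 1, by omega⟩
  rw [w_succ]
  have h1 := gcoef_pos hβ1 hβ2 (m+1) (by omega)
  have h2 := gcoef_pos hβ1 hβ2 m (by omega)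
  nlinarith

lemma w02_nonneg (hβ1 : 1 < β) (hβ2 : β < 2) : 0 ≤ w β 0 + w β 2 := by
  have h1 : gcoef β 1 = (1 - (β+1)/((0:ℕ)+1:ℝ)) * gcoef β 0 := gcoef_succ 0
  have h2 : gcoef β 2 = (1 - (β+1)/((1:ℕ)+1:ℝ)) * gcoef β 1 := gcoef_succ 1
  have h0 : gcoef β 0 = 1 := rfl
  rw [w_zero, show (2:ℕ) = 1 + 1 from rfl, w_succ, h2, h1, h0]
  push_cast
  nlinarith [mul_nonneg (mul_nonneg (by linarith : (0:ℝ) ≤ β) (by linarith : (0:ℝ) ≤ β - 1))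
    (by linarith : (0:ℝ) ≤ β + 2)]

lemma wsum_eq : ∀ n : ℕ, ∑ k ∈ range (n+2), w β k
    = β/2 * ∑ k ∈ range (n+2), gcoef β k + (2-β)/2 * ∑ k ∈ range (n+1), gcoef β k := by
  intro n
  induction n with
  | zero =>
    have h1 : w β 1 = β / 2 * gcoef β 1 + (2 - β) / 2 * gcoef β 0 := w_succ 0
    rw [Finset.sum_range_succ, Finset.sum_range_succ, Finset.sum_range_zero,
      Finset.sum_range_succ, Finset.sum_range_succ, Finset.sum_range_zero,
      w_zero, h1]
    ring
  | succ n ih =>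
    rw [Finset.sum_range_succ (n := n+2), ih, w_succ,
      Finset.sum_range_succ (n := n+2), Finset.sum_range_succ (n := n+1)]
    ring

lemma wsum_nonpos (hβ1 : 1 < β) (hβ2 : β < 2) :
    ∀ n, 2 ≤ n → ∑ k ∈ range (n+1), w β k ≤ 0 := by
  intro n hn
  obtain ⟨m, rfl⟩ : ∃ m, n = m + 1 := ⟨n - 1, by omega⟩
  rw [wsum_eq]
  have hg1 := gsum_neg hβ1 hβ2 (m+1) (by omega)
  have hg2 := gsum_neg hβ1 hβ2 m (by omega)
  nlinarith

/-- auxiliary Toeplitz off-diagonal coefficients -/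
noncomputable def tcoef (β : ℝ) (d : ℕ) : ℝ := if d = 1 then w β 0 + w β 2 else w β (d+1)

lemma tcoef_nonneg (hβ1 : 1 < β) (hβ2 : β < 2) : ∀ d, 1 ≤ d → 0 ≤ tcoef β d := by
  intro d hd
  rcases eq_or_lt_of_le hd with h | h
  · rw [tcoef, if_pos h.symm]; exact w02_nonneg hβ1 hβ2
  · rw [tcoef, if_neg (by omega)]; exact w_nonneg hβ1 hβ2 _ (by omega)

lemma tsum_claim : ∀ m : ℕ, ∑ k ∈ range (m+1), tcoef β (k+1)
    = ∑ k ∈ range (m+3), w β k - w β 1 := by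
  intro m
  induction m with
  | zero =>
    rw [Finset.sum_range_one, tcoef, if_pos rfl, Finset.sum_range_succ,
      Finset.sum_range_succ, Finset.sum_range_one]
    ring
  | succ n ih =>
    rw [Finset.sum_range_succ, ih, tcoef, if_neg (by omega),
      Finset.sum_range_succ (n := n+3)]
    ring_nf

lemma tsum_le (hβ1 : 1 < β) (hβ2 : β < 2) :
    ∀ m : ℕ, ∑ k ∈ range m, tcoef β (k+1) ≤ -(w β 1) := by
  intro m
  cases m with
  | zero => simpa using le_of_lt (by linarith [w1_neg hβ1 hβ2])
  | succ m =>
    rw [tsum_claim]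
    have := wsum_nonpos hβ1 hβ2 (m+2) (by omega)
    linarith

end AuxCoeff

section AuxMatrix

open Finset

variable {β : ℝ}

lemma natrow (hβ1 : 1 < β) (hβ2 : β < 2) (n i : ℕ) (hi : i < n) :
    ∑ j ∈ range n, (if j = i then 0 else if j < i then tcoef β (i - j) else tcoef β (j - i))
      ≤ -(2 * w β 1) := by
  set f : ℕ → ℝ := fun j =>
    (if j = i then 0 else if j < i then tcoef β (i - j) else tcoef β (j - i)) with hf
  have hsplit : ∑ j ∈ range (i+1), f j + ∑ j ∈ Ico (i+1) n, f j = ∑ j ∈ range n, f j :=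
    Finset.sum_range_add_sum_Ico f (by omega)
  have hA : ∑ j ∈ range (i+1), f j ≤ -(w β 1) := by
    rw [Finset.sum_range_succ]
    have hfi : f i = 0 := by simp [hf]
    have hcongr : ∑ j ∈ range i, f j = ∑ j ∈ range i, tcoef β (i - j) := by
      refine Finset.sum_congr rfl fun j hj => ?_
      have hj' := Finset.mem_range.1 hj
      simp only [hf]
      rw [if_neg (by omega), if_pos hj']
    have hrefl : ∑ j ∈ range i, tcoef β (i - (i - 1 - j)) = ∑ j ∈ range i, tcoef β (i - j) :=
      Finset.sum_range_reflect (fun j => tcoef β (i - j)) i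
    have hshift : ∑ j ∈ range i, tcoef β (i - (i - 1 - j)) = ∑ j ∈ range i, tcoef β (j + 1) := by
      refine Finset.sum_congr rfl fun j hj => ?_
      have hj' := Finset.mem_range.1 hj
      congr 1
      omega
    rw [hfi, hcongr, ← hrefl, hshift, add_zero]
    exact tsum_le hβ1 hβ2 i
  have hB : ∑ j ∈ Ico (i+1) n, f j ≤ -(w β 1) := by
    rw [Finset.sum_Ico_eq_sum_range]
    have hcongr : ∑ k ∈ range (n - (i+1)), f (i + 1 + k)
        = ∑ k ∈ range (n - (i+1)), tcoef β (k + 1) := by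
      refine Finset.sum_congr rfl fun k _ => ?_
      simp only [hf]
      rw [if_neg (by omega), if_neg (by omega)]
      congr 1
      omega
    rw [hcongr]
    exact tsum_le hβ1 hβ2 _
  linarith

lemma gsym_row (hβ1 : 1 < β) (hβ2 : β < 2) (N : ℕ) (i : Fin (N-1)) :
    ∑ j ∈ Finset.univ.erase i, |(Gmat β N + (Gmat β N)ᵀ) i j| ≤ -(2 * w β 1) := by
  set Gs := Gmat β N + (Gmat β N)ᵀ with hGs
  have key : ∀ j : Fin (N-1), (if j = i then 0 else |Gs i j|)
      = (if (j:ℕ) = (i:ℕ) then 0 else if (j:ℕ) < (i:ℕ) then tcoef β ((i:ℕ) - (j:ℕ))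
          else tcoef β ((j:ℕ) - (i:ℕ))) := by
    intro j
    by_cases hji : j = i
    · simp [hji]
    · have hne : (j:ℕ) ≠ (i:ℕ) := fun hc => hji (Fin.ext hc)
      rw [if_neg hji, if_neg hne]
      have hentry : Gs i j = Gmat β N i j + Gmat β N j i := rfl
      rcases Nat.lt_or_ge (j:ℕ) (i:ℕ) with hlt | hge
      · rw [if_pos hlt]
        rcases Nat.lt_or_ge ((j:ℕ)+1) (i:ℕ) with hlt2 | hge2
        · -- distance ≥ 2
          have hG1 : Gmat β N i j = w β ((i:ℕ)+1-(j:ℕ)) := by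
            simp only [Gmat, Matrix.of_apply]
            rw [if_pos (by omega)]
          have hG2 : Gmat β N j i = 0 := by
            simp only [Gmat, Matrix.of_apply]
            rw [if_neg (by omega)]
          rw [hentry, hG1, hG2, add_zero, tcoef, if_neg (by omega)]
          rw [show (i:ℕ) - (j:ℕ) + 1 = (i:ℕ) + 1 - (j:ℕ) by omega]
          exact abs_of_nonneg (w_nonneg hβ1 hβ2 _ (by omega))
        · -- j = i - 1
          have hij : (i:ℕ) = (j:ℕ) + 1 := by omega
          have hG1 : Gmat β N i j = w β 2 := by
            simp only [Gmat, Matrix.of_apply]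
            rw [if_pos (by omega), show (i:ℕ)+1-(j:ℕ) = 2 by omega]
          have hG2 : Gmat β N j i = w β 0 := by
            simp only [Gmat, Matrix.of_apply]
            rw [if_pos (by omega), show (j:ℕ)+1-(i:ℕ) = 0 by omega]
          rw [hentry, hG1, hG2, tcoef, if_pos (by omega), add_comm]
          exact abs_of_nonneg (w02_nonneg hβ1 hβ2)
      · have hgt : (i:ℕ) < (j:ℕ) := by omega
        rw [if_neg (by omega)]
        rcases Nat.lt_or_ge ((i:ℕ)+1) (j:ℕ) with hlt2 | hge2
        · have hG1 : Gmat β N i j = 0 := by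
            simp only [Gmat, Matrix.of_apply]
            rw [if_neg (by omega)]
          have hG2 : Gmat β N j i = w β ((j:ℕ)+1-(i:ℕ)) := by
            simp only [Gmat, Matrix.of_apply]
            rw [if_pos (by omega)]
          rw [hentry, hG1, hG2, zero_add, tcoef, if_neg (by omega)]
          rw [show (j:ℕ) - (i:ℕ) + 1 = (j:ℕ) + 1 - (i:ℕ) by omega]
          exact abs_of_nonneg (w_nonneg hβ1 hβ2 _ (by omega))
        · have hij : (j:ℕ) = (i:ℕ) + 1 := by omega
          have hG1 : Gmat β N i j = w β 0 := by
            simp only [Gmat, Matrix.of_apply]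
            rw [if_pos (by omega), show (i:ℕ)+1-(j:ℕ) = 0 by omega]
          have hG2 : Gmat β N j i = w β 2 := by
            simp only [Gmat, Matrix.of_apply]
            rw [if_pos (by omega), show (j:ℕ)+1-(i:ℕ) = 2 by omega]
          rw [hentry, hG1, hG2, tcoef, if_pos (by omega)]
          exact abs_of_nonneg (w02_nonneg hβ1 hβ2)
  have hsum : ∑ j ∈ Finset.univ.erase i, |Gs i j|
      = ∑ j : Fin (N-1), (if j = i then 0 else |Gs i j|) := by
    rw [← Finset.add_sum_erase _ _ (Finset.mem_univ i), if_pos rfl, zero_add]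
    exact Finset.sum_congr rfl fun j hj => (if_neg (Finset.ne_of_mem_erase hj)).symm
  rw [hsum]
  calc ∑ j : Fin (N-1), (if j = i then 0 else |Gs i j|)
      = ∑ j ∈ range (N-1), (if j = (i:ℕ) then 0 else if j < (i:ℕ) then tcoef β ((i:ℕ) - j)
          else tcoef β (j - (i:ℕ))) := by
        rw [← Fin.sum_univ_eq_sum_range]
        exact Finset.sum_congr rfl fun j _ => key j
    _ ≤ -(2 * w β 1) := natrow hβ1 hβ2 (N-1) i i.isLt

lemma quad_pos {n : ℕ} (B : Matrix (Fin n) (Fin n) ℝ) (hsym : ∀ i j, B i j = B j i)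
    (hdom : ∀ i, ∑ j ∈ Finset.univ.erase i, |B i j| < B i i) (x : Fin n → ℝ) (hx : x ≠ 0) :
    0 < ∑ i, ∑ j, x i * B i j * x j := by
  classical
  set F : Fin n → Fin n → ℝ :=
    fun i j => if j = i then 0 else x i * B i j * x j + |B i j| * x i ^ 2 with hF
  -- double sum of F is nonnegative
  have hFnonneg : 0 ≤ ∑ i, ∑ j, F i j := by
    have hpair : ∀ i j : Fin n, 0 ≤ F i j + F j i := by
      intro i j
      by_cases hji : j = i
      · subst hji; simp [hF]
      · rw [hF]
        simp only
        rw [if_neg hji, if_neg (fun hc => hji hc.symm), ← hsym i j]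
        nlinarith [mul_nonneg (sub_nonneg.2 (le_abs_self (B i j))) (sq_nonneg (x i - x j)),
          mul_nonneg (sub_nonneg.2 (neg_abs_le (B i j))) (sq_nonneg (x i + x j))]
    have hswap : ∑ i, ∑ j, F j i = ∑ i, ∑ j, F i j := Finset.sum_comm
    have h2 : 0 ≤ ∑ i, ∑ j, (F i j + F j i) := by
      refine Finset.sum_nonneg fun i _ => Finset.sum_nonneg fun j _ => hpair i j
    simp only [Finset.sum_add_distrib] at h2
    linarith [hswap]
  -- rewrite double sum of F for each row
  have hFrow : ∀ i, ∑ j, F i j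
      = ∑ j ∈ Finset.univ.erase i, x i * B i j * x j
        + (∑ j ∈ Finset.univ.erase i, |B i j|) * x i ^ 2 := by
    intro i
    rw [← Finset.add_sum_erase _ _ (Finset.mem_univ i)]
    have hFi : F i i = 0 := by simp [hF]
    rw [hFi, zero_add, Finset.sum_mul, ← Finset.sum_add_distrib]
    exact Finset.sum_congr rfl fun j hj => by
      rw [hF]; simp only; rw [if_neg (Finset.ne_of_mem_erase hj)]
  -- expand the quadratic form
  have hrow : ∀ i, ∑ j, x i * B i j * x j
      = B i i * x i ^ 2 + ∑ j ∈ Finset.univ.erase i, x i * B i j * x j := by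
    intro i
    rw [← Finset.add_sum_erase _ _ (Finset.mem_univ i)]
    ring_nf
  -- lower bound by the dominant diagonal part
  have hlow : ∑ i, (B i i - ∑ j ∈ Finset.univ.erase i, |B i j|) * x i ^ 2
      ≤ ∑ i, ∑ j, x i * B i j * x j := by
    have : ∑ i, ∑ j, x i * B i j * x j
        = ∑ i, (B i i - ∑ j ∈ Finset.univ.erase i, |B i j|) * x i ^ 2 + ∑ i, ∑ j, F i j := by
      rw [← Finset.sum_add_distrib]
      refine Finset.sum_congr rfl fun i _ => ?_
      rw [hrow i, hFrow i]
      ring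
    linarith [hFnonneg, this.ge, this.le]
  -- strict positivity
  obtain ⟨i0, hi0⟩ : ∃ i, x i ≠ 0 := by
    by_contra hcon
    push_neg at hcon
    exact hx (funext hcon)
  have hterm : ∀ i ∈ Finset.univ, 0 ≤ (B i i - ∑ j ∈ Finset.univ.erase i, |B i j|) * x i ^ 2 :=
    fun i _ => mul_nonneg (le_of_lt (sub_pos.2 (hdom i))) (sq_nonneg _)
  have hpos0 : 0 < (B i0 i0 - ∑ j ∈ Finset.univ.erase i0, |B i0 j|) * x i0 ^ 2 :=
    mul_pos (sub_pos.2 (hdom i0)) (by positivity)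
  have := Finset.single_le_sum hterm (Finset.mem_univ i0)
  linarith

lemma c0_pos {α τ : ℝ} (hα0 : 0 < α) (hα1 : α < 1) (hτ : 0 < τ) : 0 < c0 α τ := by
  have h1 : 0 < τ ^ (-α) := Real.rpow_pos_of_pos hτ _
  have h2 : 0 < (1 - α / 2) ^ (1 - α) := Real.rpow_pos_of_pos (by linarith) _
  have h3 : 0 < Real.Gamma (2 - α) := Real.Gamma_pos_of_pos (by linarith)
  exact div_pos (mul_pos h1 h2) h3

lemma A0_det_ne_zero {N : ℕ} (hN : 3 ≤ N) {β α h τ e1 e2 : ℝ} (hβ1 : 1 < β) (hβ2 : β < 2)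
    (hα0 : 0 < α) (hα1 : α < 1) (hh : 0 < h) (hτ : 0 < τ) (he1 : 0 < e1) (he2 : 0 < e2) :
    (A0mat β α h τ e1 e2 N).det ≠ 0 := by
  classical
  intro hdet
  obtain ⟨v, hv, hmul⟩ := (Matrix.exists_mulVec_eq_zero_iff).2 hdet
  set A := A0mat β α h τ e1 e2 N with hA
  set Gs := Gmat β N + (Gmat β N)ᵀ with hGs
  set B : Matrix (Fin (N-1)) (Fin (N-1)) ℝ := A + Aᵀ with hB
  have hσ : (0:ℝ) < 1 - α / 2 := by linarith
  have hc0 : 0 < h ^ β * c0 α τ :=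
    mul_pos (Real.rpow_pos_of_pos hh _) (c0_pos hα0 hα1 hτ)
  have hBentry : ∀ i j, B i j = 2 * (h ^ β * c0 α τ) * (if i = j then 1 else 0)
      - (1 - α / 2) * (e1 + e2) * Gs i j := by
    intro i j
    by_cases hij : i = j
    · subst hij
      simp only [hB, hA, Matrix.add_apply, Matrix.transpose_apply, A0mat, Kmat, hGs,
        Matrix.sub_apply, Matrix.smul_apply, Matrix.one_apply_eq, smul_eq_mul, eq_self_iff_true, if_true]
      ring
    · simp only [hB, hA, Matrix.add_apply, Matrix.transpose_apply, A0mat, Kmat, hGs,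
        Matrix.sub_apply, Matrix.smul_apply, smul_eq_mul,
        Matrix.one_apply_ne hij, Matrix.one_apply_ne (Ne.symm hij), if_neg hij]
      ring
  have hsym : ∀ i j, B i j = B j i := by
    intro i j
    simp only [hB, Matrix.add_apply, Matrix.transpose_apply]
    ring
  have hGsii : ∀ i : Fin (N-1), Gs i i = 2 * w β 1 := by
    intro i
    simp only [hGs, Matrix.add_apply, Matrix.transpose_apply, Gmat, Matrix.of_apply]
    rw [if_pos (by omega), show (i:ℕ)+1-(i:ℕ) = 1 by omega]
    ring
  have hdom : ∀ i, ∑ j ∈ Finset.univ.erase i, |B i j| < B i i := by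
    intro i
    have hle : ∑ j ∈ Finset.univ.erase i, |B i j|
        ≤ (1 - α / 2) * (e1 + e2) * -(2 * w β 1) := by
      have hcongr : ∑ j ∈ Finset.univ.erase i, |B i j|
          = (1 - α / 2) * (e1 + e2) * ∑ j ∈ Finset.univ.erase i, |Gs i j| := by
        rw [Finset.mul_sum]
        refine Finset.sum_congr rfl fun j hj => ?_
        have hji : i ≠ j := fun hc => (Finset.ne_of_mem_erase hj) hc.symm
        rw [hBentry i j, if_neg hji]
        rw [mul_zero, zero_sub, abs_neg, abs_mul, abs_of_pos (by positivity)]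
      rw [hcongr]
      exact mul_le_mul_of_nonneg_left (gsym_row hβ1 hβ2 N i) (by positivity)
    have hBii : B i i = 2 * (h ^ β * c0 α τ) - (1 - α / 2) * (e1 + e2) * (2 * w β 1) := by
      rw [hBentry i i, if_pos rfl, hGsii i]; ring
    rw [hBii]
    have : (0:ℝ) < (1 - α / 2) * (e1 + e2) := by positivity
    nlinarith [hle]
  have hquad := quad_pos B hsym hdom v hv
  have hAv : ∀ i, (A.mulVec v) i = 0 := fun i => by rw [hmul]; rfl
  have hzero : ∑ i, ∑ j, v i * B i j * v j = 0 := by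
    have hsplit : ∑ i, ∑ j, v i * B i j * v j
        = ∑ i, ∑ j, v i * A i j * v j + ∑ i, ∑ j, v i * A j i * v j := by
      rw [← Finset.sum_add_distrib]
      refine Finset.sum_congr rfl fun i _ => ?_
      rw [← Finset.sum_add_distrib]
      refine Finset.sum_congr rfl fun j _ => ?_
      simp only [hB, Matrix.add_apply, Matrix.transpose_apply]
      ring
    have h1 : ∑ i, ∑ j, v i * A i j * v j = 0 := by
      refine Finset.sum_eq_zero fun i _ => ?_
      have : ∑ j, v i * A i j * v j = v i * (A.mulVec v) i := by
        rw [Matrix.mulVec, dotProduct, Finset.mul_sum]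
        exact Finset.sum_congr rfl fun j _ => by ring
      rw [this, hAv i, mul_zero]
    have h2 : ∑ i, ∑ j, v i * A j i * v j = 0 := by
      rw [Finset.sum_comm]
      refine Finset.sum_eq_zero fun j _ => ?_
      have : ∑ i, v i * A j i * v j = v j * (A.mulVec v) j := by
        rw [Matrix.mulVec, dotProduct, Finset.mul_sum]
        exact Finset.sum_congr rfl fun i _ => by ring
      rw [this, hAv j, mul_zero]
    rw [hsplit, h1, h2, add_zero]
  linarith

end AuxMatrix
theorem PW_nonsingular (N M : ℕ) (hN : 3 ≤ N) (hM : 3 ≤ M)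
    (β α h τ e1 e2 : ℝ) (hβ1 : 1 < β) (hβ2 : β < 2)
    (hα0 : 0 < α) (hα1 : α < 1) (hh : 0 < h) (hτ : 0 < τ)
    (he1 : 0 < e1) (he2 : 0 < e2) :
    IsUnit (PWmat β α h τ e1 e2 M N) := by
  classical
  have hdetA0 : (A0mat β α h τ e1 e2 N).det ≠ 0 :=
    A0_det_ne_zero hN hβ1 hβ2 hα0 hα1 hh hτ he1 he2
  rw [Matrix.isUnit_iff_isUnit_det, isUnit_iff_ne_zero, ← Matrix.det_transpose]
  set P := PWmat β α h τ e1 e2 M N with hP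
  have hbt : (Pᵀ).BlockTriangular Prod.fst := by
    intro p q hpq
    have hlt : (q.1:ℕ) < (p.1:ℕ) := hpq
    show P q p = 0
    simp only [hP, PWmat, Matrix.of_apply]
    rw [if_neg (by omega), if_neg (by omega)]
  rw [hbt.det_fintype]
  refine Finset.prod_ne_zero_iff.2 fun a _ => ?_
  let e : {p : Fin (M-1) × Fin (N-1) // p.1 = a} ≃ Fin (N-1) :=
    { toFun := fun p => p.1.2
      invFun := fun x => ⟨(a, x), rfl⟩
      left_inv := fun p => Subtype.ext (Prod.ext p.2.symm rfl)
      right_inv := fun x => rfl }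
  have hblock : (Pᵀ).toSquareBlock Prod.fst a
      = ((A0mat β α h τ e1 e2 N)ᵀ).submatrix e e := by
    ext p q
    have hp : p.1.1 = a := p.2
    have hq : q.1.1 = a := q.2
    have hpq : (q.1.1 : ℕ) = (p.1.1 : ℕ) := by rw [hp, hq]
    show Pᵀ p.1 q.1 = (A0mat β α h τ e1 e2 N)ᵀ p.1.2 q.1.2
    show P q.1 p.1 = A0mat β α h τ e1 e2 N q.1.2 p.1.2
    simp only [hP, PWmat, Matrix.of_apply]
    rw [if_pos hpq]
  rw [hblock, Matrix.det_submatrix_equiv_self, Matrix.det_transpose]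
  exact hdetA0
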